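/- The map κ(r,y) = P(y + u + (−(1/2)f(y,y) + ri)x) is a bijection from R × M_u onto Q̃ \ a^⊥, where a = P(x). In particular, every class b ∈ Q̃ with b not orthogonal to a has a unique representative z with f(z,x) = 1, and z = y + u + βx with y ∈ M_u, Re β = −(1/2)f(y,y). -/
import Mathlib
open Complex Finset ComplexConjugate

noncomputable def hform (p q : ℕ) (u v : Fin (p + q) → ℂ) : ℂ :=
  ∑ j : Fin (p + q), (if (j : ℕ) < p then (1 : ℂ) else -1) * u j * conj (v j)

noncomputable def kappa0 (p q : ℕ) (x u : Fin (p + q) → ℂ) (r : ℝ)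
    (y : Fin (p + q) → ℂ) : Fin (p + q) → ℂ :=
  y + u + (-(1 / 2) * hform p q y y + r * Complex.I) • x

lemma hform_add_left (p q : ℕ) (a b v : Fin (p+q) → ℂ) :
    hform p q (a + b) v = hform p q a v + hform p q b v := by
  unfold hform; rw [← Finset.sum_add_distrib]
  refine Finset.sum_congr rfl fun j _ => ?_
  by_cases h : (j:ℕ) < p <;> simp [Pi.add_apply, h] <;> ring

lemma hform_smul_left (p q : ℕ) (c : ℂ) (a v : Fin (p+q) → ℂ) :
    hform p q (c • a) v = c * hform p q a v := by
  unfold hform; rw [Finset.mul_sum]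
  refine Finset.sum_congr rfl fun j _ => ?_
  by_cases h : (j:ℕ) < p <;> simp [Pi.smul_apply, h] <;> ring

lemma hform_conj (p q : ℕ) (a b : Fin (p+q) → ℂ) :
    conj (hform p q a b) = hform p q b a := by
  unfold hform; rw [map_sum]
  refine Finset.sum_congr rfl fun j _ => ?_
  simp only [map_mul, apply_ite (conj : ℂ → ℂ), map_one, map_neg, Complex.conj_conj]
  ring

lemma hform_add_right (p q : ℕ) (a b v : Fin (p+q) → ℂ) :
    hform p q v (a + b) = hform p q v a + hform p q v b := by
  rw [← hform_conj, hform_add_left, map_add, hform_conj, hform_conj]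

lemma hform_smul_right (p q : ℕ) (c : ℂ) (a v : Fin (p+q) → ℂ) :
    hform p q v (c • a) = conj c * hform p q v a := by
  rw [← hform_conj, hform_smul_left, map_mul, hform_conj]

/-- `κ = P ∘ κ₀` is a bijection from `ℝ × M_u` onto `Q̃ \ a^⊥` (`a = P(x)`):
it is injective on `ℝ × M_u`; every isotropic `z` with `f(z,x) ≠ 0` lies, up to a
nonzero scalar, in the image of `κ₀`; and every class not orthogonal to `a` has a
unique representative `z` with `f(z,x) = 1`. -/
theorem kappa_bijective (p q : ℕ) (hp : 1 ≤ p) (hq : 1 ≤ q)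
    (x u : Fin (p + q) → ℂ) (hx : x ≠ 0) (hxQ : hform p q x x = 0)
    (hu : u ≠ 0) (huQ : hform p q u u = 0) (hux : hform p q u x = 1) :
    (∀ (r r' : ℝ) (y y' : Fin (p + q) → ℂ),
      hform p q y x = 0 → hform p q y u = 0 →
      hform p q y' x = 0 → hform p q y' u = 0 →
      (∃ c : ℂ, c ≠ 0 ∧ kappa0 p q x u r' y' = c • kappa0 p q x u r y) →
      r = r' ∧ y = y') ∧
    (∀ z : Fin (p + q) → ℂ, z ≠ 0 → hform p q z z = 0 → hform p q z x ≠ 0 →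
      ∃ (r : ℝ) (y : Fin (p + q) → ℂ), hform p q y x = 0 ∧ hform p q y u = 0 ∧
        ∃ c : ℂ, c ≠ 0 ∧ z = c • kappa0 p q x u r y) ∧
    (∀ z : Fin (p + q) → ℂ, z ≠ 0 → hform p q z z = 0 → hform p q z x ≠ 0 →
      ∃! w : Fin (p + q) → ℂ,
        (∃ c : ℂ, c ≠ 0 ∧ w = c • z) ∧ hform p q w x = 1) := by
  have hxu : hform p q x u = 1 := by rw [← hform_conj, hux, map_one]
  refine ⟨?_, ?_, ?_⟩
  · -- injectivity
    rintro r r' y y' hyx hyu hy'x hy'u ⟨c, hc, heq⟩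
    unfold kappa0 at heq
    have k1 : hform p q (y + u + (-(1/2) * hform p q y y + (r:ℂ) * Complex.I) • x) x = 1 := by
      simp only [hform_add_left, hform_smul_left, hyx, hux, hxQ]; ring
    have k1' : hform p q (y' + u + (-(1/2) * hform p q y' y' + (r':ℂ) * Complex.I) • x) x = 1 := by
      simp only [hform_add_left, hform_smul_left, hy'x, hux, hxQ]; ring
    have hc1 : c = 1 := by
      have h := congrArg (fun v => hform p q v x) heq
      simp only [hform_smul_left, k1, k1'] at h
      linear_combination -h
    rw [hc1, one_smul] at heq
    have hββ' : -(1/2) * hform p q y' y' + (r':ℂ) * Complex.I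
        = -(1/2) * hform p q y y + (r:ℂ) * Complex.I := by
      have h := congrArg (fun v => hform p q v u) heq
      simp only [hform_add_left, hform_smul_left, hyu, hy'u, huQ, hxu] at h
      linear_combination h
    have hyy' : y' = y := by
      rw [hββ'] at heq
      exact add_right_cancel (add_right_cancel heq)
    rw [hyy'] at hββ'
    have hr : (r:ℂ) = (r':ℂ) := by
      have h2 : (r:ℂ) * Complex.I = (r':ℂ) * Complex.I := by linear_combination -hββ'
      exact mul_right_cancel₀ Complex.I_ne_zero h2
    exact ⟨by exact_mod_cast hr, hyy'.symm⟩
  · -- surjectivity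
    intro z hz hzz hzx
    obtain ⟨α, hα⟩ : ∃ a, a = hform p q z x := ⟨_, rfl⟩
    have hαz : α ≠ 0 := hα ▸ hzx
    obtain ⟨w, hw⟩ : ∃ w, w = α⁻¹ • z := ⟨_, rfl⟩
    have hwx : hform p q w x = 1 := by
      rw [hw, hform_smul_left, ← hα, inv_mul_cancel₀ hαz]
    obtain ⟨β, hβ⟩ : ∃ b, b = hform p q w u := ⟨_, rfl⟩
    obtain ⟨y, hy⟩ : ∃ y, y = w + (-1 : ℂ) • u + (-β) • x := ⟨_, rfl⟩
    have hyx : hform p q y x = 0 := by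
      simp only [hy, hform_add_left, hform_smul_left, hwx, hux, hxQ]; ring
    have hyu : hform p q y u = 0 := by
      simp only [hy, hform_add_left, hform_smul_left, huQ, hxu, ← hβ]; ring
    have hxy : hform p q x y = 0 := by rw [← hform_conj, hyx, map_zero]
    have huy : hform p q u y = 0 := by rw [← hform_conj, hyu, map_zero]
    have hwdef : w = y + u + β • x := by
      rw [hy]; funext j
      simp only [Pi.add_apply, Pi.smul_apply, smul_eq_mul]
      ring
    have hww : hform p q w w = 0 := by
      rw [hw]
      simp only [hform_smul_left, hform_smul_right, hzz]; ring
    have hexp : hform p q y y + β + conj β = 0 := by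
      rw [hwdef] at hww
      simp only [hform_add_left, hform_add_right, hform_smul_left, hform_smul_right,
        hyx, hyu, hxy, huy, hxQ, huQ, hux, hxu] at hww
      linear_combination hww
    have hβeq : -(1/2 : ℂ) * hform p q y y + (β.im : ℝ) * Complex.I = β := by
      have hfyy : hform p q y y = -(β + conj β) := by linear_combination hexp
      calc -(1/2 : ℂ) * hform p q y y + (β.im : ℝ) * Complex.I
          = (β.re : ℂ) + (β.im : ℝ) * Complex.I := by
            rw [hfyy, Complex.add_conj]; push_cast; ring
        _ = β := Complex.re_add_im β
    refine ⟨β.im, y, hyx, hyu, α, hαz, ?_⟩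
    have hk : kappa0 p q x u β.im y = w := by
      unfold kappa0; rw [hβeq, ← hwdef]
    rw [hk, hw, smul_smul, mul_inv_cancel₀ hαz, one_smul]
  · -- unique normalized representative
    intro z hz hzz hzx
    refine ⟨(hform p q z x)⁻¹ • z, ⟨⟨(hform p q z x)⁻¹, inv_ne_zero hzx, rfl⟩, ?_⟩, ?_⟩
    · rw [hform_smul_left, inv_mul_cancel₀ hzx]
    · rintro w ⟨⟨c, hc, rfl⟩, hw1⟩
      rw [hform_smul_left] at hw1
      rw [eq_inv_of_mul_eq_one_left hw1]
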